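/- Let A be an abelian group and let φ : ℚ^n → A be a constructible function (constant on each piece of a finite partition of ℚ^n into constructible sets). Let f : ℚ^n → ℚ^m be an affine linear map. Then the pushforward f_*φ, defined by (f_*φ)(w) = ∫_{f^{-1}(w)} φ dχ', is a constructible function on ℚ^m, and ∫_{ℚ^n} φ dχ' = ∫_{ℚ^m} f_*φ dχ'. -/

import Mathlib

set_option linter.unusedSectionVars false
set_option maxHeartbeats 1000000


variable {V : Type} [AddCommGroup V] [Module ℚ V]

/-- A (rational) polyhedron in a `ℚ`-vector space: a finite intersection of
closed affine half-spaces. -/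
def IsPolyhedron (S : Set V) : Prop :=
  ∃ (m : ℕ) (f : Fin m → (V →ᵃ[ℚ] ℚ)), S = {v | ∀ i, 0 ≤ f i v}

/-- Constructible subsets: the Boolean algebra generated by polyhedra. -/
inductive IsConstructible : Set V → Prop
  | poly {S : Set V} : IsPolyhedron S → IsConstructible S
  | compl {S : Set V} : IsConstructible S → IsConstructible Sᶜ
  | union {S T : Set V} : IsConstructible S → IsConstructible T →
      IsConstructible (S ∪ T)

/-- `χ` is a bounded Euler characteristic: a `ℤ`-valued invariant of
constructible sets, additive on disjoint unions, assigning `1` to every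
non-empty polyhedron. -/
def IsEulerChar (χ : Set V → ℤ) : Prop :=
  (∀ A B : Set V, IsConstructible A → IsConstructible B → Disjoint A B →
    χ (A ∪ B) = χ A + χ B) ∧
  (∀ S : Set V, IsPolyhedron S → S.Nonempty → χ S = 1)

/-- A function to an abelian group is constructible if it is constant on each
piece of a finite partition into constructible sets. -/
def IsConstructibleFun {A : Type} (φ : V → A) : Prop :=
  ∃ (r : ℕ) (σ : Fin r → Set V) (a : Fin r → A),
    (∀ i, IsConstructible (σ i)) ∧ (∀ v : V, ∃! i, v ∈ σ i) ∧
    (∀ i, ∀ v ∈ σ i, φ v = a i)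

/-- `c` is the integral `∫_Γ φ dχ`, computed from a witnessing constructible
partition on which `φ` is constant. -/
def IntegralEq {A : Type} [AddCommGroup A] (χ : Set V → ℤ) (φ : V → A)
    (Γ : Set V) (c : A) : Prop :=
  ∃ (r : ℕ) (σ : Fin r → Set V) (a : Fin r → A),
    (∀ i, IsConstructible (σ i)) ∧ (∀ v : V, ∃! i, v ∈ σ i) ∧
    (∀ i, ∀ v ∈ σ i, φ v = a i) ∧
    c = ∑ i, χ (σ i ∩ Γ) • a i

section Aux

open Classical in
noncomputable def ind (S : Set V) (v : V) : ℤ := if v ∈ S then 1 else 0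

lemma ind_of_mem {S : Set V} {v : V} (h : v ∈ S) : ind S v = 1 := if_pos h
lemma ind_of_not_mem {S : Set V} {v : V} (h : v ∉ S) : ind S v = 0 := if_neg h

lemma ind_inter (S T : Set V) (v : V) : ind (S ∩ T) v = ind S v * ind T v := by
  by_cases hS : v ∈ S <;> by_cases hT : v ∈ T <;>
    simp [ind, hS, hT]

lemma ind_compl (S : Set V) (v : V) : ind Sᶜ v = 1 - ind S v := by
  by_cases hS : v ∈ S <;> simp [ind, hS]

lemma ind_union (S T : Set V) (v : V) :
    ind (S ∪ T) v = ind S v + ind T v - ind S v * ind T v := by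
  by_cases hS : v ∈ S <;> by_cases hT : v ∈ T <;> simp [ind, hS, hT]

lemma ind_univ (v : V) : ind (Set.univ : Set V) v = 1 := ind_of_mem (Set.mem_univ v)

lemma isPolyhedron_of_fintype {ι : Type} [Fintype ι] (f : ι → (V →ᵃ[ℚ] ℚ)) :
    IsPolyhedron {v : V | ∀ i, 0 ≤ f i v} := by
  refine ⟨Fintype.card ι, f ∘ (Fintype.equivFin ι).symm, ?_⟩
  ext v
  constructor
  · intro h j; exact h _
  · intro h i
    have := h (Fintype.equivFin ι i)
    simpa using this

lemma poly_univ : IsPolyhedron (Set.univ : Set V) := by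
  refine ⟨0, Fin.elim0, ?_⟩
  ext v; simp

lemma poly_empty : IsPolyhedron (∅ : Set V) := by
  refine ⟨1, fun _ => AffineMap.const ℚ V (-1 : ℚ), ?_⟩
  ext v
  simp

lemma IsPolyhedron.inter {S T : Set V} (hS : IsPolyhedron S) (hT : IsPolyhedron T) :
    IsPolyhedron (S ∩ T) := by
  obtain ⟨m1, f, rfl⟩ := hS; obtain ⟨m2, g, rfl⟩ := hT
  have : ({v : V | ∀ i, 0 ≤ f i v} ∩ {v | ∀ i, 0 ≤ g i v})
      = {v : V | ∀ i : Fin m1 ⊕ Fin m2, 0 ≤ Sum.elim f g i v} := by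
    ext v; simp [Sum.forall]
  rw [this]
  exact isPolyhedron_of_fintype _

lemma constructible_univ : IsConstructible (Set.univ : Set V) := .poly poly_univ
lemma constructible_empty : IsConstructible (∅ : Set V) := .poly poly_empty

lemma IsConstructible.inter {S T : Set V} (hS : IsConstructible S) (hT : IsConstructible T) :
    IsConstructible (S ∩ T) := by
  have : S ∩ T = (Sᶜ ∪ Tᶜ)ᶜ := by rw [Set.compl_union, compl_compl, compl_compl]
  rw [this]
  exact (hS.compl.union hT.compl).compl

lemma constructible_biInter {ι : Type} (s : Finset ι) (S : ι → Set V)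
    (h : ∀ i, IsConstructible (S i)) : IsConstructible (⋂ i ∈ s, S i) := by
  classical
  induction s using Finset.induction with
  | empty => simpa using constructible_univ
  | insert _ _ hne ih =>
      rw [Finset.set_biInter_insert]
      exact (h _).inter ih

lemma constructible_iInter {ι : Type} [Fintype ι] (S : ι → Set V)
    (h : ∀ i, IsConstructible (S i)) : IsConstructible (⋂ i, S i) := by
  have := constructible_biInter Finset.univ S h
  simpa using this

lemma constructible_biUnion {ι : Type} (s : Finset ι) (S : ι → Set V)
    (h : ∀ i, IsConstructible (S i)) : IsConstructible (⋃ i ∈ s, S i) := by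
  classical
  induction s using Finset.induction with
  | empty => simpa using constructible_empty
  | insert _ _ hne ih =>
      rw [Finset.set_biUnion_insert]
      exact (h _).union ih

lemma chi_empty {χ : Set V → ℤ} (hχ : IsEulerChar χ) : χ (∅ : Set V) = 0 := by
  have h := hχ.1 ∅ ∅ constructible_empty constructible_empty (by simp)
  simp at h
  omega

lemma chi_biUnion {χ : Set V → ℤ} (hχ : IsEulerChar χ) {ι : Type} (s : Finset ι)
    (B : ι → Set V) (hcon : ∀ i, IsConstructible (B i))
    (hdisj : ∀ i ∈ s, ∀ j ∈ s, i ≠ j → Disjoint (B i) (B j)) :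
    χ (⋃ i ∈ s, B i) = ∑ i ∈ s, χ (B i) := by
  classical
  induction s using Finset.induction with
  | empty => simpa using chi_empty hχ
  | @insert a s hne ih =>
      rw [Finset.set_biUnion_insert, Finset.sum_insert hne]
      rw [hχ.1 _ _ (hcon a) (constructible_biUnion s B hcon) ?_]
      · rw [ih (fun i hi j hj hij => hdisj i (Finset.mem_insert_of_mem hi) j
          (Finset.mem_insert_of_mem hj) hij)]
      · simp only [Set.disjoint_iUnion_right]
        intro i hi
        exact hdisj a (Finset.mem_insert_self a s) i (Finset.mem_insert_of_mem hi)
          (fun h => hne (h ▸ hi))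

lemma chi_iUnion {χ : Set V → ℤ} (hχ : IsEulerChar χ) {ι : Type} [Fintype ι]
    (B : ι → Set V) (hcon : ∀ i, IsConstructible (B i))
    (hdisj : ∀ i j, i ≠ j → Disjoint (B i) (B j)) :
    χ (⋃ i, B i) = ∑ i, χ (B i) := by
  have := chi_biUnion hχ Finset.univ B hcon (fun i _ j _ h => hdisj i j h)
  simpa using this

section Atoms

variable {ι : Type} [Fintype ι] [DecidableEq ι]

def atom (D : ι → Set V) (s : ι → Bool) : Set V := {v | ∀ i, v ∈ D i ↔ s i = true}

open Classical in
noncomputable def atomSig (D : ι → Set V) (v : V) : ι → Bool := fun i => decide (v ∈ D i)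

lemma mem_atom_atomSig (D : ι → Set V) (v : V) : v ∈ atom D (atomSig D v) := by
  intro i
  classical
  simp [atomSig]

lemma atomSig_eq_of_mem {D : ι → Set V} {s : ι → Bool} {v : V} (h : v ∈ atom D s) :
    s = atomSig D v := by
  classical
  funext i
  have hi := h i
  by_cases hv : v ∈ D i
  · simp [atomSig, hv, hi.mp hv]
  · simp only [atomSig, decide_eq_false hv]
    cases hs : s i
    · rfl
    · exact absurd (hi.mpr hs) hv

lemma atom_constructible {D : ι → Set V} (hD : ∀ i, IsConstructible (D i)) (s : ι → Bool) :
    IsConstructible (atom D s) := by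
  have : atom D s = ⋂ i, (if s i then D i else (D i)ᶜ) := by
    ext v
    simp only [atom, Set.mem_iInter, Set.mem_setOf_eq]
    refine forall_congr' fun i => ?_
    cases hsi : s i <;> simp
  rw [this]
  refine constructible_iInter _ fun i => ?_
  split
  · exact hD i
  · exact (hD i).compl

lemma atom_disjoint (D : ι → Set V) {s s' : ι → Bool} (h : s ≠ s') :
    Disjoint (atom D s) (atom D s') := by
  rw [Set.disjoint_left]
  intro v hv hv'
  exact h ((atomSig_eq_of_mem hv).trans (atomSig_eq_of_mem hv').symm)

lemma D_eq_biUnion_atoms (D : ι → Set V) (i : ι) :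
    D i = ⋃ s ∈ Finset.univ.filter (fun s : ι → Bool => s i = true), atom D s := by
  classical
  ext v
  simp only [Set.mem_iUnion, exists_prop, Finset.mem_filter, Finset.mem_univ, true_and]
  constructor
  · intro hv
    exact ⟨atomSig D v, by simp [atomSig, hv], mem_atom_atomSig D v⟩
  · rintro ⟨s, hsi, hs⟩
    exact (hs i).mpr hsi

lemma chi_D_eq {χ : Set V → ℤ} (hχ : IsEulerChar χ) {D : ι → Set V}
    (hD : ∀ i, IsConstructible (D i)) (i : ι) :
    χ (D i) = ∑ s ∈ Finset.univ.filter (fun s : ι → Bool => s i = true), χ (atom D s) := by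
  classical
  rw [D_eq_biUnion_atoms D i]
  exact chi_biUnion hχ _ _ (fun s => atom_constructible hD s)
    (fun s _ s' _ h => atom_disjoint D h)

end Atoms

lemma chi_sum_zero {χ : Set V → ℤ} (hχ : IsEulerChar χ) {ι : Type} [Fintype ι]
    (S : ι → Set V) (c : ι → ℤ) (hcon : ∀ i, IsConstructible (S i))
    (hzero : ∀ v, ∑ i, c i * ind (S i) v = 0) :
    ∑ i, c i * χ (S i) = 0 := by
  classical
  have step1 : ∑ i, c i * χ (S i)
      = ∑ i, ∑ s : ι → Bool, (if s i = true then c i * χ (atom S s) else 0) := by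
    refine Finset.sum_congr rfl fun i _ => ?_
    rw [chi_D_eq hχ hcon i, Finset.mul_sum, Finset.sum_filter]
  rw [step1, Finset.sum_comm]
  refine Finset.sum_eq_zero fun s _ => ?_
  have collect : ∑ i, (if s i = true then c i * χ (atom S s) else 0)
      = (∑ i, (if s i = true then c i else 0)) * χ (atom S s) := by
    rw [Finset.sum_mul]
    refine Finset.sum_congr rfl fun i _ => ?_
    split <;> simp
  rw [collect]
  rcases Set.eq_empty_or_nonempty (atom S s) with he | ⟨v, hv⟩
  · rw [he, chi_empty hχ, mul_zero]
  · have : ∑ i, (if s i = true then c i else 0) = ∑ i, c i * ind (S i) v := by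
      refine Finset.sum_congr rfl fun i _ => ?_
      by_cases hsi : s i = true
      · rw [if_pos hsi, ind_of_mem ((hv i).mpr hsi), mul_one]
      · rw [if_neg hsi, ind_of_not_mem (fun hm => hsi ((hv i).mp hm)), mul_zero]
    rw [this, hzero v, zero_mul]

lemma chi_eq_sum {χ : Set V → ℤ} (hχ : IsEulerChar χ) {ι : Type} [Fintype ι]
    {S : Set V} {T : ι → Set V} {c : ι → ℤ}
    (hS : IsConstructible S) (hT : ∀ i, IsConstructible (T i))
    (hpt : ∀ v, ind S v = ∑ i, c i * ind (T i) v) :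
    χ S = ∑ i, c i * χ (T i) := by
  classical
  have h := chi_sum_zero hχ (ι := Option ι) (fun o => o.elim S T)
    (fun o => o.elim (-1) c) (fun o => by cases o with | none => exact hS | some i => exact hT i)
    (fun v => by
      rw [Fintype.sum_option]
      simp only [Option.elim]
      rw [hpt v]; ring)
  rw [Fintype.sum_option] at h
  simp only [Option.elim] at h
  linarith

lemma exists_rep_aux {S : Set V} (hS : IsConstructible S) :
    ∃ (ι : Type) (_ : Fintype ι) (P : ι → Set V) (c : ι → ℤ),
      (∀ t, IsPolyhedron (P t)) ∧ ∀ v, ind S v = ∑ t, c t * ind (P t) v := by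
  induction hS with
  | @poly S h =>
      exact ⟨Unit, inferInstance, fun _ => S, fun _ => 1, fun _ => h, fun v => by simp⟩
  | @compl S hS ih =>
      obtain ⟨ι, hι, P, c, hP, hrep⟩ := ih
      letI := hι
      refine ⟨Option ι, inferInstance, fun o => o.elim Set.univ P,
        fun o => o.elim 1 (fun i => -c i), fun o => ?_, fun v => ?_⟩
      · cases o with
        | none => exact poly_univ
        | some i => exact hP i
      · rw [Fintype.sum_option]
        simp only [Option.elim]
        rw [ind_compl, ind_univ, hrep v]
        have : ∑ x : ι, -c x * ind (P x) v = -∑ t : ι, c t * ind (P t) v := by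
          rw [← Finset.sum_neg_distrib]
          exact Finset.sum_congr rfl fun i _ => by ring
        rw [this]; ring
  | @union S T hS hT ihS ihT =>
      obtain ⟨ι, hι, P, c, hP, hrepS⟩ := ihS
      obtain ⟨κ, hκ, Q, d, hQ, hrepT⟩ := ihT
      letI := hι; letI := hκ
      refine ⟨(ι ⊕ κ) ⊕ ι × κ, inferInstance,
        Sum.elim (Sum.elim P Q) (fun p => P p.1 ∩ Q p.2),
        Sum.elim (Sum.elim c d) (fun p => -(c p.1 * d p.2)), fun t => ?_, fun v => ?_⟩
      · rcases t with (i | j) | p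
        · exact hP i
        · exact hQ j
        · exact (hP p.1).inter (hQ p.2)
      · rw [Fintype.sum_sum_type, Fintype.sum_sum_type]
        simp only [Sum.elim_inl, Sum.elim_inr]
        have hprod : (∑ p : ι × κ, -(c p.1 * d p.2) * ind (P p.1 ∩ Q p.2) v)
            = -((∑ i, c i * ind (P i) v) * (∑ j, d j * ind (Q j) v)) := by
          rw [Finset.sum_mul_sum, Fintype.sum_prod_type, ← Finset.sum_neg_distrib]
          refine Finset.sum_congr rfl fun i _ => ?_
          rw [← Finset.sum_neg_distrib]
          refine Finset.sum_congr rfl fun j _ => ?_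
          rw [ind_inter]
          ring
        rw [hprod, ind_union, hrepS v, hrepT v]
        ring

lemma exists_rep {S : Set V} (hS : IsConstructible S) :
    ∃ (k : ℕ) (P : Fin k → Set V) (c : Fin k → ℤ),
      (∀ t, IsPolyhedron (P t)) ∧ ∀ v, ind S v = ∑ t, c t * ind (P t) v := by
  obtain ⟨ι, hι, P, c, hP, hrep⟩ := exists_rep_aux hS
  letI := hι
  refine ⟨Fintype.card ι, P ∘ (Fintype.equivFin ι).symm, c ∘ (Fintype.equivFin ι).symm,
    fun t => hP _, fun v => ?_⟩
  rw [hrep v]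
  exact (Equiv.sum_comp (Fintype.equivFin ι).symm
    (fun i => c i * ind (P i) v)).symm


end Aux

section Geometry

/-- Fourier–Motzkin elimination: core arithmetic fact over `ℚ`. -/
lemma FM_core {M : ℕ} (Ay b : Fin M → ℚ) :
    (∃ t : ℚ, ∀ i, 0 ≤ Ay i + t * b i) ↔
      ((∀ i, b i = 0 → 0 ≤ Ay i) ∧
       ∀ i j, 0 < b i → b j < 0 → 0 ≤ (-(b j)) * Ay i + b i * Ay j) := by
  classical
  constructor
  · rintro ⟨t, ht⟩
    constructor
    · intro i hi
      have := ht i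
      rw [hi] at this
      linarith
    · intro i j hbi hbj
      have h1 := ht i
      have h2 := ht j
      nlinarith [mul_nonneg (le_of_lt (neg_pos.mpr hbj)) h1, mul_nonneg (le_of_lt hbi) h2]
  · rintro ⟨h0, hpair⟩
    set Lf : Finset (Fin M) := Finset.univ.filter (fun i => 0 < b i) with hLf
    set Uf : Finset (Fin M) := Finset.univ.filter (fun j => b j < 0) with hUf
    by_cases hL : Lf.Nonempty
    · obtain ⟨i₀, hi₀, hmax⟩ := Finset.exists_max_image Lf (fun i => -Ay i / b i) hL
      have hbi₀ : 0 < b i₀ := by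
        have := Finset.mem_filter.mp hi₀
        exact this.2
      refine ⟨-Ay i₀ / b i₀, fun i => ?_⟩
      rcases lt_trichotomy (b i) 0 with hneg | hzero | hpos
      · -- upper bound constraint
        have hp := hpair i₀ i hbi₀ hneg
        have hkey : 0 ≤ b i₀ * (Ay i + (-Ay i₀ / b i₀) * b i) := by
          have : (-Ay i₀ / b i₀) * b i₀ = -Ay i₀ := by
            field_simp
          nlinarith [this]
        have := (mul_nonneg_iff_of_pos_left hbi₀).mp hkey
        linarith
      · rw [hzero]
        simpa using h0 i hzero
      · -- lower bound: -Ay i / b i ≤ -Ay i₀ / b i₀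
        have hiL : i ∈ Lf := Finset.mem_filter.mpr ⟨Finset.mem_univ i, hpos⟩
        have hle := hmax i hiL
        have h2 : -Ay i ≤ (-Ay i₀ / b i₀) * b i := (div_le_iff₀ hpos).mp hle
        linarith
    · by_cases hU : Uf.Nonempty
      · obtain ⟨j₀, hj₀, hmin⟩ := Finset.exists_min_image Uf (fun j => Ay j / (-(b j))) hU
        have hbj₀ : b j₀ < 0 := (Finset.mem_filter.mp hj₀).2
        refine ⟨Ay j₀ / (-(b j₀)), fun i => ?_⟩
        rcases lt_trichotomy (b i) 0 with hneg | hzero | hpos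
        · have hiU : i ∈ Uf := Finset.mem_filter.mpr ⟨Finset.mem_univ i, hneg⟩
          have hle := hmin i hiU
          have hpos' : 0 < -(b i) := neg_pos.mpr hneg
          rw [div_le_div_iff₀ (neg_pos.mpr hbj₀) hpos'] at hle
          have hkey : (Ay j₀ / (-(b j₀))) * (-(b i)) ≤ Ay i := by
            rw [div_mul_eq_mul_div, div_le_iff₀ (neg_pos.mpr hbj₀)]
            nlinarith [hle]
          nlinarith [hkey]
        · rw [hzero]; simpa using h0 i hzero
        · exact absurd (Finset.mem_filter.mpr ⟨Finset.mem_univ i, hpos⟩)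
            (fun h => hL ⟨i, h⟩)
      · refine ⟨0, fun i => ?_⟩
        rcases lt_trichotomy (b i) 0 with hneg | hzero | hpos
        · exact absurd (Finset.mem_filter.mpr ⟨Finset.mem_univ i, hneg⟩)
            (fun h => hU ⟨i, h⟩)
        · rw [hzero]; simpa using h0 i hzero
        · exact absurd (Finset.mem_filter.mpr ⟨Finset.mem_univ i, hpos⟩)
            (fun h => hL ⟨i, h⟩)

noncomputable def snocZero (k : ℕ) : (Fin k → ℚ) →ₗ[ℚ] (Fin (k+1) → ℚ) where
  toFun y := Fin.snoc y 0
  map_add' y z := by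
    funext i; refine Fin.lastCases ?_ ?_ i <;> simp
  map_smul' c y := by
    funext i; refine Fin.lastCases ?_ ?_ i <;> simp

lemma projectLast_polyhedron {k : ℕ} {P : Set (Fin (k+1) → ℚ)} (hP : IsPolyhedron P) :
    IsPolyhedron ((fun x : Fin (k+1) → ℚ => x ∘ Fin.castSucc) '' P) := by
  classical
  obtain ⟨M, g, rfl⟩ := hP
  set A : Fin M → ((Fin k → ℚ) →ᵃ[ℚ] ℚ) :=
    fun i => (g i).comp (snocZero k).toAffineMap with hA
  set b : Fin M → ℚ := fun i => (g i).linear (Fin.snoc 0 1) with hb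
  have key : ∀ (i : Fin M) (y : Fin k → ℚ) (t : ℚ),
      g i (Fin.snoc y t) = A i y + t * b i := by
    intro i y t
    have h1 : (Fin.snoc y t : Fin (k+1) → ℚ)
        = (t • (Fin.snoc 0 1 : Fin (k+1) → ℚ)) + (Fin.snoc y 0 : Fin (k+1) → ℚ) := by
      funext j; refine Fin.lastCases ?_ ?_ j <;> simp [Fin.snoc]
    rw [h1]
    have h2 := (g i).map_vadd (Fin.snoc y 0 : Fin (k+1) → ℚ)
      (t • (Fin.snoc 0 1 : Fin (k+1) → ℚ))
    simp only [vadd_eq_add] at h2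
    rw [h2, (g i).linear.map_smul]
    simp only [smul_eq_mul, hA, hb]
    simp [AffineMap.comp_apply, snocZero]
    ring
  set F : Fin M ⊕ Fin M × Fin M → ((Fin k → ℚ) →ᵃ[ℚ] ℚ) :=
    fun c => Sum.elim
      (fun i => if b i = 0 then A i else 0)
      (fun p => if 0 < b p.1 ∧ b p.2 < 0 then (-(b p.2)) • A p.1 + (b p.1) • A p.2 else 0) c
    with hF
  have himg : ((fun x : Fin (k+1) → ℚ => x ∘ Fin.castSucc) '' {x | ∀ i, 0 ≤ g i x})
      = {y | ∀ c, 0 ≤ F c y} := by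
    ext y
    have hiff : (∃ t : ℚ, ∀ i, 0 ≤ A i y + t * b i) ↔ ∀ c, 0 ≤ F c y := by
      rw [FM_core (fun i => A i y) b]
      constructor
      · rintro ⟨h0, hpair⟩ c
        rcases c with i | ⟨i, j⟩
        · simp only [hF, Sum.elim_inl]
          split
          · exact h0 i ‹_›
          · simp
        · simp only [hF, Sum.elim_inr]
          split
          · rename_i hc
            have := hpair i j hc.1 hc.2
            simpa using this
          · simp
      · intro h
        constructor
        · intro i hi
          have := h (Sum.inl i)
          simp only [hF, Sum.elim_inl, if_pos hi] at this
          exact this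
        · intro i j hbi hbj
          have := h (Sum.inr (i, j))
          simp only [hF, Sum.elim_inr, if_pos (And.intro hbi hbj)] at this
          simpa using this
    constructor
    · rintro ⟨x, hx, rfl⟩
      refine hiff.mp ⟨x (Fin.last k), fun i => ?_⟩
      have hxs : (Fin.snoc (x ∘ Fin.castSucc) (x (Fin.last k)) : Fin (k+1) → ℚ) = x := by
        have := Fin.snoc_init_self x
        exact this
      rw [← key i (x ∘ Fin.castSucc) (x (Fin.last k)), hxs]
      exact hx i
    · intro hy
      obtain ⟨t, ht⟩ := hiff.mpr hy
      refine ⟨Fin.snoc y t, fun i => ?_, ?_⟩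
      · rw [key i y t]; exact ht i
      · funext j
        simp [Fin.snoc]
  rw [himg]
  exact isPolyhedron_of_fintype F

lemma project_polyhedron (k : ℕ) : ∀ (j : ℕ) (P : Set (Fin (k+j) → ℚ)),
    IsPolyhedron P → IsPolyhedron ((fun x : Fin (k+j) → ℚ => x ∘ Fin.castAdd j) '' P) := by
  intro j
  induction j with
  | zero =>
      intro P hP
      have heq : (fun x : Fin (k+0) → ℚ => x ∘ Fin.castAdd 0) = id := by
        funext x
        funext i
        show x (Fin.castAdd 0 i) = x i
        rfl
      rw [heq, Set.image_id]
      exact hP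
  | succ j ih =>
      intro P hP
      have h1 : IsPolyhedron ((fun x : Fin ((k+j)+1) → ℚ => x ∘ Fin.castSucc) '' P) :=
        projectLast_polyhedron hP
      have h2 := ih _ h1
      have heq : ((fun y : Fin (k+j) → ℚ => y ∘ Fin.castAdd j) ∘
          (fun x : Fin ((k+j)+1) → ℚ => x ∘ Fin.castSucc))
          = (fun x : Fin (k+(j+1)) → ℚ => x ∘ Fin.castAdd (j+1)) := by
        funext x
        funext i
        show x (Fin.castSucc (Fin.castAdd j i)) = x (Fin.castAdd (j+1) i)
        rfl
      rw [← Set.image_comp, heq] at h2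
      exact h2

lemma image_polyhedron {n m : ℕ} (f : (Fin n → ℚ) →ᵃ[ℚ] (Fin m → ℚ))
    {P : Set (Fin n → ℚ)} (hP : IsPolyhedron P) : IsPolyhedron (f '' P) := by
  obtain ⟨M, g, rfl⟩ := hP
  set q : (Fin (m+n) → ℚ) →ₗ[ℚ] (Fin n → ℚ) := LinearMap.funLeft ℚ ℚ (Fin.natAdd m) with hq
  set G : Fin M ⊕ (Fin m ⊕ Fin m) → ((Fin (m+n) → ℚ) →ᵃ[ℚ] ℚ) :=
    Sum.elim (fun i => (g i).comp q.toAffineMap)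
      (Sum.elim
        (fun j => ((LinearMap.proj j : (Fin m → ℚ) →ₗ[ℚ] ℚ).toAffineMap.comp
            (f.comp q.toAffineMap)) -
          (LinearMap.proj (Fin.castAdd n j) : (Fin (m+n) → ℚ) →ₗ[ℚ] ℚ).toAffineMap)
        (fun j => (LinearMap.proj (Fin.castAdd n j) : (Fin (m+n) → ℚ) →ₗ[ℚ] ℚ).toAffineMap -
          ((LinearMap.proj j : (Fin m → ℚ) →ₗ[ℚ] ℚ).toAffineMap.comp
            (f.comp q.toAffineMap)))) with hG
  set Q : Set (Fin (m+n) → ℚ) := {u | ∀ c, 0 ≤ G c u} with hQ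
  have hQpoly : IsPolyhedron Q := isPolyhedron_of_fintype G
  have hQmem : ∀ u : Fin (m+n) → ℚ,
      u ∈ Q ↔ ((∀ i, 0 ≤ g i (q u)) ∧ ∀ j, f (q u) j = u (Fin.castAdd n j)) := by
    intro u
    constructor
    · intro h
      refine ⟨fun i => h (Sum.inl i), fun j => ?_⟩
      have h1 := h (Sum.inr (Sum.inl j))
      have h2 := h (Sum.inr (Sum.inr j))
      simp only [hG, Sum.elim_inl, Sum.elim_inr, AffineMap.coe_sub, Pi.sub_apply, AffineMap.comp_apply,
        LinearMap.coe_toAffineMap, LinearMap.proj_apply] at h1 h2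
      linarith
    · rintro ⟨h1, h2⟩ c
      rcases c with i | (j | j) <;>
        simp only [hG, Sum.elim_inl, Sum.elim_inr, AffineMap.coe_sub, Pi.sub_apply, AffineMap.comp_apply,
          LinearMap.coe_toAffineMap, LinearMap.proj_apply]
      · exact h1 i
      · rw [h2 j]; simp
      · rw [h2 j]; simp
  have himg : f '' {v | ∀ i, 0 ≤ g i v}
      = (fun u : Fin (m+n) → ℚ => u ∘ Fin.castAdd n) '' Q := by
    ext w
    constructor
    · rintro ⟨v, hv, rfl⟩
      refine ⟨Fin.append (f v) v, ?_, ?_⟩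
      · rw [hQmem]
        have hqv : q (Fin.append (f v) v) = v := by
          funext i
          simp [hq, LinearMap.funLeft_apply, Fin.append_right]
        refine ⟨fun i => by rw [hqv]; exact hv i, fun j => by rw [hqv, Fin.append_left]⟩
      · funext j
        simp [Fin.append_left]
    · rintro ⟨u, hu, rfl⟩
      rw [hQmem] at hu
      refine ⟨q u, fun i => hu.1 i, ?_⟩
      funext j
      exact hu.2 j
  rw [himg]
  exact project_polyhedron m n Q hQpoly

lemma fiber_polyhedron {n m : ℕ} (f : (Fin n → ℚ) →ᵃ[ℚ] (Fin m → ℚ))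
    {P : Set (Fin n → ℚ)} (hP : IsPolyhedron P) (w : Fin m → ℚ) :
    IsPolyhedron (P ∩ f ⁻¹' {w}) := by
  obtain ⟨M, g, rfl⟩ := hP
  set G : Fin M ⊕ (Fin m ⊕ Fin m) → ((Fin n → ℚ) →ᵃ[ℚ] ℚ) :=
    Sum.elim g
      (Sum.elim
        (fun j => ((LinearMap.proj j : (Fin m → ℚ) →ₗ[ℚ] ℚ).toAffineMap.comp f) -
          AffineMap.const ℚ (Fin n → ℚ) (w j))
        (fun j => AffineMap.const ℚ (Fin n → ℚ) (w j) -
          ((LinearMap.proj j : (Fin m → ℚ) →ₗ[ℚ] ℚ).toAffineMap.comp f))) with hG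
  have : {v : Fin n → ℚ | ∀ i, 0 ≤ g i v} ∩ f ⁻¹' {w} = {v | ∀ c, 0 ≤ G c v} := by
    ext v
    simp only [Set.mem_inter_iff, Set.mem_setOf_eq, Set.mem_preimage, Set.mem_singleton_iff]
    constructor
    · rintro ⟨h1, h2⟩ c
      rcases c with i | (j | j) <;>
        simp only [hG, Sum.elim_inl, Sum.elim_inr, AffineMap.coe_sub, Pi.sub_apply, AffineMap.comp_apply,
          LinearMap.coe_toAffineMap, LinearMap.proj_apply, AffineMap.const_apply]
      · exact h1 i
      · rw [h2]; simp
      · rw [h2]; simp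
    · intro h
      refine ⟨fun i => h (Sum.inl i), ?_⟩
      funext j
      have h1 := h (Sum.inr (Sum.inl j))
      have h2 := h (Sum.inr (Sum.inr j))
      simp only [hG, Sum.elim_inl, Sum.elim_inr, AffineMap.coe_sub, Pi.sub_apply, AffineMap.comp_apply,
        LinearMap.coe_toAffineMap, LinearMap.proj_apply, AffineMap.const_apply] at h1 h2
      linarith
  rw [this]
  exact isPolyhedron_of_fintype G

lemma isConstructibleFun_of_fintype {A : Type} {ι : Type} [Fintype ι] (φ : V → A)
    (σ : ι → Set V) (a : ι → A)
    (h1 : ∀ i, IsConstructible (σ i)) (h2 : ∀ v : V, ∃! i, v ∈ σ i)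
    (h3 : ∀ i, ∀ v ∈ σ i, φ v = a i) : IsConstructibleFun φ := by
  set e := Fintype.equivFin ι
  refine ⟨Fintype.card ι, fun j => σ (e.symm j), fun j => a (e.symm j),
    fun j => h1 _, fun v => ?_, fun j v hv => h3 _ v hv⟩
  obtain ⟨i, hi, hu⟩ := h2 v
  refine ⟨e i, by simpa using hi, fun j hj => ?_⟩
  rw [← hu _ hj, Equiv.apply_symm_apply]

lemma integralEq_of_fintype {A : Type} [AddCommGroup A] {ι : Type} [Fintype ι]
    (χ : Set V → ℤ) (φ : V → A) (Γ : Set V) (σ : ι → Set V) (a : ι → A)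
    (h1 : ∀ i, IsConstructible (σ i)) (h2 : ∀ v : V, ∃! i, v ∈ σ i)
    (h3 : ∀ i, ∀ v ∈ σ i, φ v = a i) :
    IntegralEq χ φ Γ (∑ i, χ (σ i ∩ Γ) • a i) := by
  set e := Fintype.equivFin ι
  refine ⟨Fintype.card ι, fun j => σ (e.symm j), fun j => a (e.symm j),
    fun j => h1 _, fun v => ?_, fun j v hv => h3 _ v hv, ?_⟩
  · obtain ⟨i, hi, hu⟩ := h2 v
    refine ⟨e i, by simpa using hi, fun j hj => ?_⟩
    rw [← hu _ hj, Equiv.apply_symm_apply]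
  · exact (Equiv.sum_comp e.symm fun i => χ (σ i ∩ Γ) • a i).symm

lemma chi_inter_partition {χ : Set V → ℤ} (hχ : IsEulerChar χ) {ι : Type} [Fintype ι]
    {S : Set V} (hS : IsConstructible S) (τ : ι → Set V)
    (hτ : ∀ i, IsConstructible (τ i)) (hpart : ∀ v : V, ∃! i, v ∈ τ i) :
    χ S = ∑ i, χ (S ∩ τ i) := by
  have hU : S = ⋃ i, (S ∩ τ i) := by
    ext v
    simp only [Set.mem_iUnion, Set.mem_inter_iff]
    constructor
    · intro hv
      obtain ⟨i, hi, _⟩ := hpart v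
      exact ⟨i, hv, hi⟩
    · rintro ⟨i, hv, _⟩
      exact hv
  conv_lhs => rw [hU]
  refine chi_iUnion hχ _ (fun i => hS.inter (hτ i)) ?_
  intro i j hij
  rw [Set.disjoint_left]
  rintro v ⟨-, hvi⟩ ⟨-, hvj⟩
  obtain ⟨i₀, -, hu⟩ := hpart v
  exact hij ((hu i hvi).trans (hu j hvj).symm)

lemma integral_univ_unique {A : Type} [AddCommGroup A] {χ : Set V → ℤ}
    (hχ : IsEulerChar χ) {φ : V → A} {c₁ c₂ : A}
    (h1 : IntegralEq χ φ Set.univ c₁) (h2 : IntegralEq χ φ Set.univ c₂) : c₁ = c₂ := by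
  obtain ⟨r, σ, a, hσ, hpσ, hvσ, rfl⟩ := h1
  obtain ⟨s, τ, b, hτ, hpτ, hvτ, rfl⟩ := h2
  simp only [Set.inter_univ]
  have key : ∀ (i : Fin r) (j : Fin s), χ (σ i ∩ τ j) • a i = χ (σ i ∩ τ j) • b j := by
    intro i j
    rcases Set.eq_empty_or_nonempty (σ i ∩ τ j) with he | ⟨v, hv⟩
    · rw [he, chi_empty hχ, zero_smul, zero_smul]
    · rw [← hvσ i v hv.1, ← hvτ j v hv.2]
  calc ∑ i, χ (σ i) • a i
      = ∑ i, ∑ j, χ (σ i ∩ τ j) • a i := by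
        refine Finset.sum_congr rfl fun i _ => ?_
        rw [chi_inter_partition hχ (hσ i) τ hτ hpτ, Finset.sum_smul]
    _ = ∑ i, ∑ j, χ (σ i ∩ τ j) • b j := by
        exact Finset.sum_congr rfl fun i _ => Finset.sum_congr rfl fun j _ => key i j
    _ = ∑ j, ∑ i, χ (σ i ∩ τ j) • b j := Finset.sum_comm
    _ = ∑ j, χ (τ j) • b j := by
        refine Finset.sum_congr rfl fun j _ => ?_
        rw [← Finset.sum_smul]
        congr 1
        rw [chi_inter_partition hχ (hτ j) σ hσ hpσ]
        exact Finset.sum_congr rfl fun i _ => by rw [Set.inter_comm]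

lemma chi_fiber {n m : ℕ} {χ : Set (Fin n → ℚ) → ℤ} (hχ : IsEulerChar χ)
    (f : (Fin n → ℚ) →ᵃ[ℚ] (Fin m → ℚ)) {P : Set (Fin n → ℚ)} (hP : IsPolyhedron P)
    (w : Fin m → ℚ) : χ (P ∩ f ⁻¹' {w}) = ind (f '' P) w := by
  by_cases hw : w ∈ f '' P
  · obtain ⟨v, hv, hfv⟩ := hw
    have hmem : w ∈ f '' P := ⟨v, hv, hfv⟩
    rw [ind_of_mem hmem]
    exact hχ.2 _ (fiber_polyhedron f hP w) ⟨v, hv, by simp [hfv]⟩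
  · have : P ∩ f ⁻¹' {w} = ∅ := by
      ext v
      simp only [Set.mem_inter_iff, Set.mem_preimage, Set.mem_singleton_iff,
        Set.mem_empty_iff_false, iff_false, not_and]
      intro hv hfv
      exact hw ⟨v, hv, hfv⟩
    rw [this, chi_empty hχ, ind_of_not_mem hw]

lemma chi_image {n m : ℕ} {χn : Set (Fin n → ℚ) → ℤ} {χm : Set (Fin m → ℚ) → ℤ}
    (hχn : IsEulerChar χn) (hχm : IsEulerChar χm)
    (f : (Fin n → ℚ) →ᵃ[ℚ] (Fin m → ℚ)) {P : Set (Fin n → ℚ)} (hP : IsPolyhedron P) :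
    χm (f '' P) = χn P := by
  rcases Set.eq_empty_or_nonempty P with rfl | hne
  · rw [Set.image_empty, chi_empty hχm, chi_empty hχn]
  · rw [hχm.2 _ (image_polyhedron f hP) (hne.image f), hχn.2 _ hP hne]


end Geometry

/-- Motivic Fubini for affine maps: the fiberwise integral of a constructible
function along an affine map is constructible, and integrating it out gives the
total integral. -/
theorem stmt4 {n m : ℕ} {A : Type} [AddCommGroup A]
    (χn : Set (Fin n → ℚ) → ℤ) (χm : Set (Fin m → ℚ) → ℤ)
    (hχn : IsEulerChar χn) (hχm : IsEulerChar χm)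
    (φ : (Fin n → ℚ) → A) (hφ : IsConstructibleFun φ)
    (f : (Fin n → ℚ) →ᵃ[ℚ] (Fin m → ℚ)) :
    ∃ ψ : (Fin m → ℚ) → A, IsConstructibleFun ψ ∧
      (∀ w : Fin m → ℚ, IntegralEq χn φ (f ⁻¹' {w}) (ψ w)) ∧
      (∀ c c' : A, IntegralEq χn φ Set.univ c → IntegralEq χm ψ Set.univ c' →
        c = c') := by
  classical
  obtain ⟨r, σ, a, hσcon, hσpart, hσval⟩ := hφ
  choose k P c hPpoly hrep using fun i => exists_rep (hσcon i)
  set T : (Σ i : Fin r, Fin (k i)) → Set (Fin m → ℚ) := fun j => f '' P j.1 j.2 with hT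
  have hTcon : ∀ j, IsConstructible (T j) :=
    fun j => .poly (image_polyhedron f (hPpoly j.1 j.2))
  set E : Fin r → (Fin m → ℚ) → ℤ :=
    fun i w => ∑ t, c i t * ind (T ⟨i, t⟩) w with hE
  set ψ : (Fin m → ℚ) → A := fun w => ∑ i, E i w • a i with hψ
  have hfibcon : ∀ w : Fin m → ℚ, IsConstructible (f ⁻¹' {w}) := by
    intro w
    have h := fiber_polyhedron f poly_univ w
    rw [Set.univ_inter] at h
    exact .poly h
  have key : ∀ (i : Fin r) (w : Fin m → ℚ), χn (σ i ∩ f ⁻¹' {w}) = E i w := by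
    intro i w
    have hpt : ∀ v, ind (σ i ∩ f ⁻¹' {w}) v
        = ∑ t, c i t * ind (P i t ∩ f ⁻¹' {w}) v := by
      intro v
      by_cases hv : v ∈ f ⁻¹' {w}
      · rw [ind_inter, ind_of_mem hv, mul_one, hrep i v]
        refine Finset.sum_congr rfl fun t _ => ?_
        rw [ind_inter, ind_of_mem hv, mul_one]
      · rw [ind_inter, ind_of_not_mem hv, mul_zero]
        symm
        refine Finset.sum_eq_zero fun t _ => ?_
        rw [ind_inter, ind_of_not_mem hv, mul_zero, mul_zero]
    rw [chi_eq_sum hχn ((hσcon i).inter (hfibcon w))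
      (fun t => .poly (fiber_polyhedron f (hPpoly i t) w)) hpt, hE]
    exact Finset.sum_congr rfl fun t _ => by rw [chi_fiber hχn f (hPpoly i t) w]
  have hψfib : ∀ w, ψ w = ∑ i, χn (σ i ∩ f ⁻¹' {w}) • a i := by
    intro w
    exact Finset.sum_congr rfl fun i _ => by rw [key]
  set bval : ((Σ i : Fin r, Fin (k i)) → Bool) → A :=
    fun s => ∑ i, (∑ t, c i t * (if s ⟨i, t⟩ = true then (1:ℤ) else 0)) • a i with hbval
  have hψconst : ∀ s, ∀ w ∈ atom T s, ψ w = bval s := by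
    intro s w hw
    refine Finset.sum_congr rfl fun i _ => ?_
    congr 1
    refine Finset.sum_congr rfl fun t _ => ?_
    congr 1
    by_cases hst : s ⟨i, t⟩ = true
    · rw [if_pos hst, ind_of_mem ((hw ⟨i, t⟩).mpr hst)]
    · rw [if_neg hst, ind_of_not_mem (fun hm => hst ((hw ⟨i, t⟩).mp hm))]
  have hAtpart : ∀ w, ∃! s, w ∈ atom T s := fun w =>
    ⟨atomSig T w, mem_atom_atomSig T w, fun s hs => atomSig_eq_of_mem hs⟩
  refine ⟨ψ, ?_, ?_, ?_⟩
  · exact isConstructibleFun_of_fintype ψ (atom T) bval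
      (fun s => atom_constructible hTcon s) hAtpart hψconst
  · intro w
    exact ⟨r, σ, a, hσcon, hσpart, hσval, hψfib w⟩
  · intro c₀ c₀' h₀ h₀'
    have hc : IntegralEq χn φ Set.univ (∑ i, χn (σ i ∩ Set.univ) • a i) :=
      integralEq_of_fintype χn φ Set.univ σ a hσcon hσpart hσval
    have hc' : IntegralEq χm ψ Set.univ (∑ s, χm (atom T s ∩ Set.univ) • bval s) :=
      integralEq_of_fintype χm ψ Set.univ (atom T) bval
        (fun s => atom_constructible hTcon s) hAtpart hψconst
    have e1 : c₀ = ∑ i, χn (σ i) • a i := by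
      rw [integral_univ_unique hχn h₀ hc]
      exact Finset.sum_congr rfl fun i _ => by rw [Set.inter_univ]
    have e1' : c₀' = ∑ s, χm (atom T s) • bval s := by
      rw [integral_univ_unique hχm h₀' hc']
      exact Finset.sum_congr rfl fun s _ => by rw [Set.inter_univ]
    rw [e1, e1']
    symm
    calc ∑ s, χm (atom T s) • bval s
        = ∑ s, ∑ i, (χm (atom T s)
            * ∑ t, c i t * (if s ⟨i, t⟩ = true then (1:ℤ) else 0)) • a i := by
          refine Finset.sum_congr rfl fun s _ => ?_
          rw [hbval, Finset.smul_sum]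
          exact Finset.sum_congr rfl fun i _ => by rw [smul_smul]
      _ = ∑ i, (∑ s, χm (atom T s)
            * ∑ t, c i t * (if s ⟨i, t⟩ = true then (1:ℤ) else 0)) • a i := by
          rw [Finset.sum_comm]
          exact Finset.sum_congr rfl fun i _ => (Finset.sum_smul).symm
      _ = ∑ i, χn (σ i) • a i := by
          refine Finset.sum_congr rfl fun i _ => ?_
          congr 1
          calc ∑ s, χm (atom T s) * ∑ t, c i t * (if s ⟨i, t⟩ = true then (1:ℤ) else 0)
              = ∑ s, ∑ t, c i t * (if s ⟨i, t⟩ = true then χm (atom T s) else 0) := by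
                refine Finset.sum_congr rfl fun s _ => ?_
                rw [Finset.mul_sum]
                refine Finset.sum_congr rfl fun t _ => ?_
                split <;> ring
            _ = ∑ t, c i t * ∑ s, (if s ⟨i, t⟩ = true then χm (atom T s) else 0) := by
                rw [Finset.sum_comm]
                exact Finset.sum_congr rfl fun t _ => (Finset.mul_sum _ _ _).symm
            _ = ∑ t, c i t * χm (T ⟨i, t⟩) := by
                refine Finset.sum_congr rfl fun t _ => ?_
                rw [chi_D_eq hχm hTcon ⟨i, t⟩, Finset.sum_filter]
            _ = ∑ t, c i t * χn (P i t) := by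
                refine Finset.sum_congr rfl fun t _ => ?_
                rw [hT]
                rw [chi_image hχn hχm f (hPpoly i t)]
            _ = χn (σ i) := (chi_eq_sum hχn (hσcon i)
                (fun t => .poly (hPpoly i t)) (hrep i)).symm
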